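/- The images π₁G* and π₂G* of the graph G* under the affine maps π₁(x) = x/9 + 3/9 and π₂(x) = x/9 + 5/9 are subgraphs of the whirl graph G, and they are vertex-disjoint. -/

import Mathlib

open SimpleGraph

/-- The `n`-th vertex level of the whirl graph: `V_n = {i/3^n : 0 ≤ i ≤ 3^n}`. -/
def Vn (n : ℕ) : Set ℚ := {q | ∃ i : ℕ, i ≤ 3 ^ n ∧ q = (i : ℚ) / 3 ^ n}

/-- The `n`-th edge level of the whirl graph. -/
def En (n : ℕ) : Set (Sym2 ℚ) :=
  {e | ∃ k : ℕ, k < 3 ^ (n - 1) ∧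
    (e = s(((3 * k : ℕ) : ℚ) / 3 ^ n, ((3 * k + 2 : ℕ) : ℚ) / 3 ^ n) ∨
     e = s(((3 * k + 1 : ℕ) : ℚ) / 3 ^ n, ((3 * k + 2 : ℕ) : ℚ) / 3 ^ n) ∨
     e = s(((3 * k + 1 : ℕ) : ℚ) / 3 ^ n, ((3 * k + 3 : ℕ) : ℚ) / 3 ^ n))}

/-- The vertex set `V = ⋃_{n ≥ 1} V_n` of the whirl graph. -/
def whirlV : Set ℚ := ⋃ n ≥ 1, Vn n

/-- The whirl graph `G`, as a simple graph on `ℚ` with edge set `⋃_{n ≥ 1} E_n`. -/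
def whirl : SimpleGraph ℚ := fromEdgeSet (⋃ n ≥ 1, En n)

/-- `G_{≤ n} = (V_n, E_1 ∪ ⋯ ∪ E_n)`. -/
def Gle (n : ℕ) : SimpleGraph ℚ := fromEdgeSet (⋃ k ∈ Set.Icc 1 n, En k)

/-- `G_{≥ n} = (V, ⋃_{k ≥ n} E_k)`. -/
def Gge (n : ℕ) : SimpleGraph ℚ := fromEdgeSet (⋃ k ≥ n, En k)

/-- Two walks are edge-disjoint if they share no edge. -/
def WalkEdgeDisjoint {V : Type*} {G : SimpleGraph V} {u v : V}
    (p q : G.Walk u v) : Prop :=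
  ∀ e, e ∈ p.edges → e ∉ q.edges

/-- Two lists (of supports of paths) traverse their common entries in the same order. -/
def ListCompat {α : Type*} [DecidableEq α] (l₁ l₂ : List α) : Prop :=
  ∀ x y, x ∈ l₁ → y ∈ l₁ → x ∈ l₂ → y ∈ l₂ →
    (l₁.idxOf x ≤ l₁.idxOf y ↔ l₂.idxOf x ≤ l₂.idxOf y)

/-- The stages `𝒞_n` of the Cantor set construction, as sets of pairs `(a, b)`
representing closed intervals `[a, b] ⊆ ℚ`. -/
def cantorStage : ℕ → Set (ℚ × ℚ)
  | 0 => {(0, 1)}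
  | n + 1 => {p | ∃ q ∈ cantorStage n,
      p = (q.1, q.1 + (q.2 - q.1) / 3) ∨ p = (q.1 + 2 * (q.2 - q.1) / 3, q.2)}

/-- The (rational points of the) Cantor set `C = ⋂_n ⋃ 𝒞_n`. -/
def cantorSetQ : Set ℚ := ⋂ n, ⋃ p ∈ cantorStage n, Set.Icc p.1 p.2

/-- `C*_n`: the endpoints of the intervals of `𝒞_n`. -/
def Cstar (n : ℕ) : Set ℚ := {x | ∃ p ∈ cantorStage n, x = p.1 ∨ x = p.2}

/-- `E*_n`: the Cantor-derived edges of level `n`. -/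
def Estar (n : ℕ) : Set (Sym2 ℚ) :=
  {e | ∃ p ∈ cantorStage (n - 1),
    e = s(p.1, p.1 + 2 * (p.2 - p.1) / 3) ∨
    e = s(p.1 + (p.2 - p.1) / 3, p.1 + 2 * (p.2 - p.1) / 3) ∨
    e = s(p.1 + (p.2 - p.1) / 3, p.2)}

/-- `M_n`: the middle edges `{a + Δ/3, a + 2Δ/3}` for `[a, a+Δ] ∈ 𝒞_{n-1}`. -/
def Mlevel (n : ℕ) : Set (Sym2 ℚ) :=
  {e | ∃ p ∈ cantorStage (n - 1),
    e = s(p.1 + (p.2 - p.1) / 3, p.1 + 2 * (p.2 - p.1) / 3)}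

/-- `C* = ⋃_{n ≥ 1} C*_n`. -/
def CstarU : Set ℚ := ⋃ n ≥ 1, Cstar n

/-- `E* = ⋃_{n ≥ 1} E*_n`. -/
def EstarU : Set (Sym2 ℚ) := ⋃ n ≥ 1, Estar n

/-- The matching `M = ⋃_{n ≥ 1} M_n`. -/
def MU : Set (Sym2 ℚ) := ⋃ n ≥ 1, Mlevel n

/-- The graph `G* = (C*, E*)`, a subgraph of the whirl graph. -/
noncomputable def Gstar : SimpleGraph ℚ := SimpleGraph.fromEdgeSet EstarU

/-- The affine map `π₁(x) = x/9 + 3/9`. -/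
def pi1 (x : ℚ) : ℚ := x / 9 + 3 / 9

/-- The affine map `π₂(x) = x/9 + 5/9`. -/
def pi2 (x : ℚ) : ℚ := x / 9 + 5 / 9

lemma cantor_spec : ∀ (n : ℕ) (p : ℚ × ℚ), p ∈ cantorStage n →
    ∃ i : ℕ, i + 1 ≤ 3 ^ n ∧ p.1 = (i : ℚ) / 3 ^ n ∧ p.2 = ((i : ℚ) + 1) / 3 ^ n := by
  intro n
  induction n with
  | zero =>
    intro p hp
    simp only [cantorStage, Set.mem_singleton_iff] at hp
    exact ⟨0, by norm_num, by simp [hp], by simp [hp]⟩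
  | succ n ih =>
    rintro p ⟨q, hq, hc⟩
    obtain ⟨i, hi, h1, h2⟩ := ih q hq
    have h3 : (3:ℚ) ^ n ≠ 0 := by positivity
    rcases hc with rfl | rfl
    · refine ⟨3 * i, ?_, ?_, ?_⟩
      · have : 3 ^ (n + 1) = 3 * 3 ^ n := by ring
        omega
      · simp only [h1]; push_cast; field_simp; ring
      · simp only [h1, h2]; push_cast; field_simp; ring
    · refine ⟨3 * i + 2, ?_, ?_, ?_⟩
      · have : 3 * (i + 1) ≤ 3 * 3 ^ n := by omega
        calc 3 * i + 2 + 1 = 3 * (i + 1) := by ring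
          _ ≤ 3 * 3 ^ n := this
          _ = 3 ^ (n + 1) := (pow_succ' 3 n).symm
      · simp only [h1, h2]; push_cast; field_simp; ring
      · simp only [h2]; push_cast; field_simp; ring

lemma pi1_frac (a m : ℕ) : pi1 ((a : ℚ) / 3 ^ m) = ((a + 3 ^ (m + 1) : ℕ) : ℚ) / 3 ^ (m + 2) := by
  have h3 : (3:ℚ) ^ m ≠ 0 := by positivity
  simp only [pi1]; push_cast; field_simp; ring

lemma pi2_frac (a m : ℕ) : pi2 ((a : ℚ) / 3 ^ m) = ((a + 5 * 3 ^ m : ℕ) : ℚ) / 3 ^ (m + 2) := by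
  have h3 : (3:ℚ) ^ m ≠ 0 := by positivity
  simp only [pi2]; push_cast; field_simp; ring

/-- Every Estar edge, written with natural numerators at scale `m+1`. -/
lemma estar_form {n : ℕ} {e : Sym2 ℚ} (he : e ∈ Estar n) :
    ∃ (m i : ℕ), i < 3 ^ m ∧
      (e = s(((3 * i : ℕ) : ℚ) / 3 ^ (m + 1), ((3 * i + 2 : ℕ) : ℚ) / 3 ^ (m + 1)) ∨
       e = s(((3 * i + 1 : ℕ) : ℚ) / 3 ^ (m + 1), ((3 * i + 2 : ℕ) : ℚ) / 3 ^ (m + 1)) ∨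
       e = s(((3 * i + 1 : ℕ) : ℚ) / 3 ^ (m + 1), ((3 * i + 3 : ℕ) : ℚ) / 3 ^ (m + 1))) := by
  obtain ⟨p, hp, hc⟩ := he
  set m := n - 1 with hm
  obtain ⟨i, hi, h1, h2⟩ := cantor_spec m p hp
  have h3 : (3:ℚ) ^ m ≠ 0 := by positivity
  have e1 : p.1 = ((3 * i : ℕ) : ℚ) / 3 ^ (m + 1) := by
    rw [h1]; push_cast; field_simp; ring
  have e2 : p.1 + (p.2 - p.1) / 3 = ((3 * i + 1 : ℕ) : ℚ) / 3 ^ (m + 1) := by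
    rw [h1, h2]; push_cast; field_simp; ring
  have e3 : p.1 + 2 * (p.2 - p.1) / 3 = ((3 * i + 2 : ℕ) : ℚ) / 3 ^ (m + 1) := by
    rw [h1, h2]; push_cast; field_simp; ring
  have e4 : p.2 = ((3 * i + 3 : ℕ) : ℚ) / 3 ^ (m + 1) := by
    rw [h2]; push_cast; field_simp; ring
  refine ⟨m, i, by omega, ?_⟩
  rcases hc with rfl | rfl | rfl
  · exact Or.inl (by rw [e3, e1])
  · exact Or.inr (Or.inl (by rw [e3, e2]))
  · exact Or.inr (Or.inr (by rw [e2, e4]))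

lemma cstar_form {n : ℕ} {x : ℚ} (hx : x ∈ Cstar n) :
    ∃ j : ℕ, j ≤ 3 ^ n ∧ x = (j : ℚ) / 3 ^ n := by
  obtain ⟨p, hp, hc⟩ := hx
  obtain ⟨i, hi, h1, h2⟩ := cantor_spec n p hp
  rcases hc with rfl | rfl
  · exact ⟨i, by omega, h1⟩
  · exact ⟨i + 1, hi, by rw [h2]; push_cast; ring⟩

lemma mem_En_union {n : ℕ} {e : Sym2 ℚ} (hn : 1 ≤ n) (he : e ∈ En n) :
    e ∈ ⋃ k ≥ 1, En k :=
  Set.mem_biUnion hn he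

/-- The images `π₁G*` and `π₂G*` of `G* = (C*, E*)` are subgraphs of the whirl graph
(their vertices lie in `V` and their edges in `E`), and they are vertex-disjoint. -/
theorem stmt19 :
    SimpleGraph.fromEdgeSet (Sym2.map pi1 '' EstarU) ≤ whirl ∧
    SimpleGraph.fromEdgeSet (Sym2.map pi2 '' EstarU) ≤ whirl ∧
    pi1 '' CstarU ⊆ whirlV ∧
    pi2 '' CstarU ⊆ whirlV ∧
    Disjoint (pi1 '' CstarU) (pi2 '' CstarU) := by
  have edgekey : ∀ (π : ℚ → ℚ) (c : ℕ), (∀ a m : ℕ, π ((a : ℚ) / 3 ^ m) = ((a + c * 3 ^ m : ℕ) : ℚ) / 3 ^ (m + 2)) →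
      c ≤ 8 → Sym2.map π '' EstarU ⊆ ⋃ k ≥ 1, En k := by
    rintro π c hπ hc8 e ⟨e0, he0, rfl⟩
    simp only [EstarU, Set.mem_iUnion] at he0
    obtain ⟨n, hn, he0⟩ := he0
    obtain ⟨m, i, hi, hcase⟩ := estar_form he0
    refine mem_En_union (n := m + 3) (by omega) ?_
    refine ⟨i + c * 3 ^ m, ?_, ?_⟩
    · have hm2 : m + 3 - 1 = m + 2 := by omega
      rw [hm2]
      have h9 : (3:ℕ) ^ (m + 2) = 9 * 3 ^ m := by ring
      nlinarith [pow_pos (by norm_num : (0:ℕ) < 3) m]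
    · have key : ∀ a : ℕ, π ((a : ℚ) / 3 ^ (m + 1)) = ((a + c * 3 ^ (m + 1) : ℕ) : ℚ) / 3 ^ (m + 3) := by
        intro a
        have := hπ a (m + 1)
        rwa [show m + 1 + 2 = m + 3 by omega] at this
      have harith : ∀ r : ℕ, 3 * i + r + c * 3 ^ (m + 1) = 3 * (i + c * 3 ^ m) + r := by
        intro r
        rw [show (3:ℕ) ^ (m + 1) = 3 * 3 ^ m from by ring]
        ring
      rcases hcase with rfl | rfl | rfl
      · left
        rw [Sym2.map_pair_eq, key, key, harith 2, show 3 * i + c * 3 ^ (m+1) = 3 * (i + c * 3 ^ m) from by have := harith 0; omega]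
      · right; left
        rw [Sym2.map_pair_eq, key, key, harith 1, harith 2]
      · right; right
        rw [Sym2.map_pair_eq, key, key, harith 1, harith 3]
  have vertkey : ∀ (π : ℚ → ℚ) (c : ℕ), (∀ a m : ℕ, π ((a : ℚ) / 3 ^ m) = ((a + c * 3 ^ m : ℕ) : ℚ) / 3 ^ (m + 2)) →
      c ≤ 8 → π '' CstarU ⊆ whirlV := by
    rintro π c hπ hc x ⟨x0, hx0, rfl⟩
    simp only [CstarU, Set.mem_iUnion] at hx0
    obtain ⟨n, hn, hx0⟩ := hx0
    obtain ⟨j, hj, rfl⟩ := cstar_form hx0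
    refine Set.mem_biUnion (show (1:ℕ) ≤ n + 2 by omega) ?_
    refine ⟨j + c * 3 ^ n, ?_, hπ j n⟩
    have h9 : 3 ^ (n + 2) = 9 * 3 ^ n := by ring
    nlinarith [pow_pos (by norm_num : (0:ℕ) < 3) n]
  have hπ1 : ∀ (a m : ℕ), pi1 ((a : ℚ) / 3 ^ m) = ((a + 3 * 3 ^ m : ℕ) : ℚ) / 3 ^ (m + 2) := by
    intro a m
    rw [pi1_frac, show a + 3 ^ (m + 1) = a + 3 * 3 ^ m from by rw [pow_succ']]
  have hπ2 : ∀ (a m : ℕ), pi2 ((a : ℚ) / 3 ^ m) = ((a + 5 * 3 ^ m : ℕ) : ℚ) / 3 ^ (m + 2) :=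
    fun a m => pi2_frac a m
  have cbound : ∀ x ∈ CstarU, 0 ≤ x ∧ x ≤ 1 := by
    intro x hx
    simp only [CstarU, Set.mem_iUnion] at hx
    obtain ⟨n, hn, hx⟩ := hx
    obtain ⟨j, hj, rfl⟩ := cstar_form hx
    have h3 : (0:ℚ) < 3 ^ n := by positivity
    constructor
    · positivity
    · rw [div_le_one h3]
      exact_mod_cast hj
  refine ⟨?_, ?_, vertkey pi1 3 hπ1 (by norm_num), vertkey pi2 5 hπ2 (by norm_num), ?_⟩
  · exact SimpleGraph.fromEdgeSet_mono (edgekey pi1 3 hπ1 (by norm_num))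
  · exact SimpleGraph.fromEdgeSet_mono (edgekey pi2 5 hπ2 (by norm_num))
  · rw [Set.disjoint_left]
    rintro z ⟨x, hx, rfl⟩ ⟨y, hy, hxy⟩
    have hx1 := (cbound x hx).2
    have hy0 := (cbound y hy).1
    have : pi1 x < pi2 y := by
      simp only [pi1, pi2]
      linarith
    rw [hxy] at this
    exact lt_irrefl _ this
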